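/- Let U and hatU be n x d real matrices with orthonormal columns (U^T U = hatU^T hatU = I_d), and let U^T hatU = W_1 Sigma W_2^T be a singular value decomposition of U^T hatU with W_1, W_2 orthogonal d x d matrices and Sigma diagonal with entries sigma_1,...,sigma_d in [0,1]. Then ||U^T hatU - W_1 W_2^T||_F <= d ||hatU hatU^T - U U^T||^2, where ||.|| is the spectral norm and ||.||_F the Frobenius norm. -/

import Mathlib

open MeasureTheory ProbabilityTheory Matrix Filter
open scoped ENNReal NNReal Topology

noncomputable section

namespace CMDSPaper

/-- Euclidean norm of a vector in `Fin d → ℝ`. -/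
def enorm2 {d : ℕ} (v : Fin d → ℝ) : ℝ := Real.sqrt (∑ j, v j ^ 2)

/-- A real random variable is sub-Gaussian. -/
def SubGaussianRV {α : Type*} [MeasurableSpace α] (μ : Measure α) (X : α → ℝ) : Prop :=
  ∃ K > 0, ∀ t ≥ 0, μ {a | t < |X a|} ≤ ENNReal.ofReal (2 * Real.exp (-(t ^ 2 / K ^ 2)))

/-- A probability distribution on `ℝ^d` is sub-Gaussian if all its one-dimensional
marginals are sub-Gaussian. -/
def SubGaussianMeasure {d : ℕ} (F : Measure (Fin d → ℝ)) : Prop :=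
  ∀ u : Fin d → ℝ, SubGaussianRV F fun z => ∑ j, z j * u j

/-- The `n × n` double centering matrix `P = I - (1/n) 1 1ᵀ`. -/
def cent (n : ℕ) : Matrix (Fin n) (Fin n) ℝ :=
  1 - (n : ℝ)⁻¹ • Matrix.of fun _ _ => (1 : ℝ)

/-- Entrywise square of a matrix. -/
def entsq {n : ℕ} (A : Matrix (Fin n) (Fin n) ℝ) : Matrix (Fin n) (Fin n) ℝ :=
  Matrix.of fun i j => A i j ^ 2

/-- `-(1/2) P M P` applied to an (already squared) dissimilarity matrix `M`. -/
def bmatSq {n : ℕ} (M : Matrix (Fin n) (Fin n) ℝ) : Matrix (Fin n) (Fin n) ℝ :=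
  (-(1 / 2) : ℝ) • (cent n * M * cent n)

/-- Entrywise square root of a diagonal matrix. -/
def dsqrt {d : ℕ} (S : Matrix (Fin d) (Fin d) ℝ) : Matrix (Fin d) (Fin d) ℝ :=
  Matrix.diagonal fun j => Real.sqrt (S j j)

/-- Entrywise inverse square root of a diagonal matrix. -/
def dinvsqrt {d : ℕ} (S : Matrix (Fin d) (Fin d) ℝ) : Matrix (Fin d) (Fin d) ℝ :=
  Matrix.diagonal fun j => (Real.sqrt (S j j))⁻¹

/-- `U`, `S` form a top-`d` eigendecomposition of the symmetric matrix `B`: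
there is a full orthonormal eigendecomposition with eigenvalues sorted in
decreasing order such that `U` consists of the first `d` eigenvector columns
and `S` is the diagonal matrix of the `d` largest eigenvalues. -/
def IsTopdEigen {n d : ℕ} (B : Matrix (Fin n) (Fin n) ℝ)
    (U : Matrix (Fin n) (Fin d) ℝ) (S : Matrix (Fin d) (Fin d) ℝ) : Prop :=
  ∃ (h : d ≤ n) (Q : Matrix (Fin n) (Fin n) ℝ) (lam : Fin n → ℝ),
    Qᵀ * Q = 1 ∧ B = Q * Matrix.diagonal lam * Qᵀ ∧ Antitone lam ∧
    (∀ i j, U i j = Q i (Fin.castLE h j)) ∧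
    S = Matrix.diagonal fun j => lam (Fin.castLE h j)

/-- The standard Gaussian on `ℝ^d`. -/
def stdGaussian (d : ℕ) : Measure (Fin d → ℝ) :=
  Measure.pi fun _ => gaussianReal 0 1

open scoped Classical in
/-- The mean-zero Gaussian measure on `ℝ^d` with covariance matrix `S`
(junk value if `S` is not positive semidefinite). -/
def mvGaussian {d : ℕ} (S : Matrix (Fin d) (Fin d) ℝ) : Measure (Fin d → ℝ) :=
  if h : S.PosSemidef then (stdGaussian d).map ((h.1.eigenvectorUnitary : Matrix (Fin d) (Fin d) ℝ) *
    Matrix.diagonal (fun i => Real.sqrt (h.1.eigenvalues i)) *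
    (star h.1.eigenvectorUnitary : Matrix (Fin d) (Fin d) ℝ)).mulVec else stdGaussian d

/-- `Φ(α, S)`: the CDF at `α` of the mean-zero Gaussian on `ℝ^d` with covariance `S`. -/
def gaussPhi {d : ℕ} (S : Matrix (Fin d) (Fin d) ℝ) (α : Fin d → ℝ) : ℝ :=
  (mvGaussian S {x | ∀ j, x j ≤ α j}).toReal

/-- Spectral (ℓ₂ operator) norm of a matrix. -/
def specNorm {m n : ℕ} (A : Matrix (Fin m) (Fin n) ℝ) : ℝ :=
  ‖LinearMap.toContinuousLinearMap (Matrix.toEuclideanLin A)‖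

/-- Frobenius norm of a matrix. -/
def frobNorm {m n : ℕ} (A : Matrix (Fin m) (Fin n) ℝ) : ℝ :=
  Real.sqrt (∑ i, ∑ j, A i j ^ 2)

/-- The sub-exponential Orlicz (ψ₁) norm of a real random variable. -/
def psi1Norm {α : Type*} [MeasurableSpace α] (μ : Measure α) (Y : α → ℝ) : ℝ :=
  sInf {t | 0 < t ∧ ∫ a, Real.exp (|Y a| / t) ∂μ ≤ 2}

end CMDSPaper

namespace CMDSPaper

lemma mulVec_bound' {m n : ℕ} (A : Matrix (Fin m) (Fin n) ℝ) (v : Fin n → ℝ) :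
    Real.sqrt (∑ i, (A.mulVec v i) ^ 2) ≤ specNorm A * Real.sqrt (∑ i, (v i) ^ 2) := by
  set x : EuclideanSpace ℝ (Fin n) := (WithLp.equiv 2 (Fin n → ℝ)).symm v
  have h := (LinearMap.toContinuousLinearMap (Matrix.toEuclideanLin A)).le_opNorm x
  have h1 : ‖(LinearMap.toContinuousLinearMap (Matrix.toEuclideanLin A)) x‖
      = Real.sqrt (∑ i, (A.mulVec v i) ^ 2) := by
    rw [LinearMap.coe_toContinuousLinearMap', Matrix.toEuclideanLin_apply_piLp_toLp,
      EuclideanSpace.norm_eq]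
    congr 1
    refine Finset.sum_congr rfl fun i _ => ?_
    rw [Real.norm_eq_abs, sq_abs]; rfl
  have h2 : ‖x‖ = Real.sqrt (∑ i, (v i) ^ 2) := by
    rw [EuclideanSpace.norm_eq]
    congr 1
    refine Finset.sum_congr rfl fun i _ => ?_
    rw [Real.norm_eq_abs, sq_abs]; rfl
  rw [h1, h2] at h
  exact h

lemma frob_eq_trace' {m n : ℕ} (A : Matrix (Fin m) (Fin n) ℝ) :
    frobNorm A = Real.sqrt ((Aᵀ * A).trace) := by
  unfold frobNorm
  congr 1
  rw [Matrix.trace, Finset.sum_comm]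
  refine Finset.sum_congr rfl fun i _ => ?_
  simp [Matrix.diag, Matrix.mul_apply, sq]


/-- Proposition, via Davis-Kahan: `‖UᵀhatU - W₁W₂ᵀ‖_F ≤ d ‖hatU hatUᵀ - U Uᵀ‖²`. -/
theorem frob_bound_svd_alignment {n d : ℕ}
    (U hatU : Matrix (Fin n) (Fin d) ℝ)
    (hU : Uᵀ * U = 1) (hhatU : hatUᵀ * hatU = 1)
    (W₁ W₂ : Matrix (Fin d) (Fin d) ℝ)
    (hW₁ : W₁ᵀ * W₁ = 1) (hW₂ : W₂ᵀ * W₂ = 1)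
    (σv : Fin d → ℝ) (hσv : ∀ j, σv j ∈ Set.Icc (0 : ℝ) 1)
    (hSVD : Uᵀ * hatU = W₁ * Matrix.diagonal σv * W₂ᵀ) :
    frobNorm (Uᵀ * hatU - W₁ * W₂ᵀ) ≤ d * specNorm (hatU * hatUᵀ - U * Uᵀ) ^ 2 := by
  set Sg := Matrix.diagonal σv with hSg
  set X := hatU * W₂ with hX
  set D := hatU * hatUᵀ - U * Uᵀ with hD
  have hW₂' : W₂ * W₂ᵀ = 1 := mul_eq_one_comm.mp hW₂
  have hSgT : Sgᵀ = Sg := by rw [hSg, Matrix.diagonal_transpose]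
  -- X columns orthonormal
  have eXX : Xᵀ * X = 1 := by
    rw [hX, Matrix.transpose_mul]
    calc W₂ᵀ * hatUᵀ * (hatU * W₂) = W₂ᵀ * (hatUᵀ * hatU) * W₂ := by
          simp [Matrix.mul_assoc]
      _ = 1 := by rw [hhatU, Matrix.mul_one, hW₂]
  have eY : D * X = X - U * (W₁ * Sg) := by
    rw [hD, hX, Matrix.sub_mul]
    have h1 : hatU * hatUᵀ * (hatU * W₂) = hatU * W₂ := by
      calc hatU * hatUᵀ * (hatU * W₂) = hatU * (hatUᵀ * hatU) * W₂ := by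
            simp [Matrix.mul_assoc]
        _ = hatU * W₂ := by rw [hhatU, Matrix.mul_one]
    have h2 : U * Uᵀ * (hatU * W₂) = U * (W₁ * Sg) := by
      calc U * Uᵀ * (hatU * W₂) = U * ((Uᵀ * hatU) * W₂) := by
            simp [Matrix.mul_assoc]
        _ = U * (W₁ * Sg) := by
            rw [hSVD, Matrix.mul_assoc (W₁ * Sg), hW₂, Matrix.mul_one]
    rw [h1, h2]
  have eYY : (D * X)ᵀ * (D * X) = 1 - Sg * Sg := by
    rw [eY]
    have hXU : Xᵀ * (U * (W₁ * Sg)) = Sg * Sg := by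
      rw [hX, Matrix.transpose_mul]
      calc W₂ᵀ * hatUᵀ * (U * (W₁ * Sg)) = W₂ᵀ * ((Uᵀ * hatU)ᵀ * W₁) * Sg := by
            simp [Matrix.mul_assoc, Matrix.transpose_mul]
        _ = Sg * Sg := by
            rw [hSVD]
            simp only [Matrix.transpose_mul, Matrix.transpose_transpose, hSgT]
            calc W₂ᵀ * (W₂ * (Sg * W₁ᵀ) * W₁) * Sg
                = (W₂ᵀ * W₂) * Sg * (W₁ᵀ * W₁) * Sg := by
                  simp [Matrix.mul_assoc]
              _ = Sg * Sg := by rw [hW₂, hW₁, Matrix.one_mul, Matrix.mul_one]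
    have hUX : (U * (W₁ * Sg))ᵀ * X = Sg * Sg := by
      have := congrArg Matrix.transpose hXU
      simpa [Matrix.transpose_mul, hSgT] using this
    have hUU : (U * (W₁ * Sg))ᵀ * (U * (W₁ * Sg)) = Sg * Sg := by
      simp only [Matrix.transpose_mul, hSgT]
      calc Sg * W₁ᵀ * Uᵀ * (U * (W₁ * Sg))
          = Sg * ((W₁ᵀ * ((Uᵀ * U) * W₁)) * Sg) := by simp [Matrix.mul_assoc]
        _ = Sg * Sg := by
            rw [hU, Matrix.one_mul, hW₁, Matrix.one_mul]
    rw [Matrix.transpose_sub, Matrix.sub_mul, Matrix.mul_sub, Matrix.mul_sub,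
      eXX, hXU, hUX, hUU]
    abel
  -- key per-column bound
  have key : ∀ j, 1 - σv j ^ 2 ≤ specNorm D ^ 2 := by
    intro j
    have hσ0 := (hσv j).1
    have hσ1 := (hσv j).2
    have hnn : (0:ℝ) ≤ 1 - σv j ^ 2 := by nlinarith
    have hcol : D.mulVec (fun i => X i j) = fun i => (D * X) i j := by
      funext i
      simp [Matrix.mulVec, Matrix.mul_apply, dotProduct]
    have hsum1 : ∑ i, ((D * X) i j) ^ 2 = 1 - σv j ^ 2 := by
      have : ((D * X)ᵀ * (D * X)) j j = 1 - σv j ^ 2 := by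
        rw [eYY]
        simp [hSg, Matrix.diagonal_mul_diagonal, Matrix.one_apply, sq]
      rw [← this, Matrix.mul_apply]
      refine Finset.sum_congr rfl fun i _ => ?_
      simp [sq]
    have hsum2 : ∑ i, (X i j) ^ 2 = 1 := by
      have : (Xᵀ * X) j j = 1 := by rw [eXX]; simp [Matrix.one_apply]
      rw [← this, Matrix.mul_apply]
      refine Finset.sum_congr rfl fun i _ => ?_
      simp [sq]
    have hb := mulVec_bound' D (fun i => X i j)
    rw [hcol, hsum1, hsum2, Real.sqrt_one, mul_one] at hb
    have : Real.sqrt (1 - σv j ^ 2) ^ 2 ≤ specNorm D ^ 2 :=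
      pow_le_pow_left₀ (Real.sqrt_nonneg _) hb 2
    rwa [Real.sq_sqrt hnn] at this
  -- Frobenius norm computation
  have hA : Uᵀ * hatU - W₁ * W₂ᵀ = W₁ * (Sg - 1) * W₂ᵀ := by
    rw [hSVD, Matrix.mul_sub, Matrix.sub_mul, Matrix.mul_one]
  have hfrob : frobNorm (Uᵀ * hatU - W₁ * W₂ᵀ) = Real.sqrt (∑ j, (σv j - 1) ^ 2) := by
    rw [hA, frob_eq_trace']
    congr 1
    have : (W₁ * (Sg - 1) * W₂ᵀ)ᵀ * (W₁ * (Sg - 1) * W₂ᵀ)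
        = W₂ * ((Sg - 1) * (Sg - 1)) * W₂ᵀ := by
      have hSgT1 : (Sg - 1)ᵀ = Sg - 1 := by
        rw [Matrix.transpose_sub, hSgT, Matrix.transpose_one]
      calc (W₁ * (Sg - 1) * W₂ᵀ)ᵀ * (W₁ * (Sg - 1) * W₂ᵀ)
          = W₂ * ((Sg-1)ᵀ * ((W₁ᵀ * W₁) * ((Sg - 1) * W₂ᵀ))) := by
            simp [Matrix.transpose_mul, Matrix.mul_assoc]
        _ = W₂ * ((Sg - 1) * (Sg - 1)) * W₂ᵀ := by
            rw [hW₁, Matrix.one_mul, hSgT1]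
            simp [Matrix.mul_assoc]
    rw [this, Matrix.trace_mul_cycle, hW₂, Matrix.one_mul]
    have : Sg - 1 = Matrix.diagonal (fun j => σv j - 1) := by
      rw [hSg, ← Matrix.diagonal_one, Matrix.diagonal_sub]
    rw [this, Matrix.diagonal_mul_diagonal, Matrix.trace_diagonal]
    refine Finset.sum_congr rfl fun j _ => (sq (σv j - 1)).symm ▸ by ring
  rw [hfrob]
  have step1 : Real.sqrt (∑ j, (σv j - 1) ^ 2) ≤ ∑ j, (1 - σv j) := by
    have h1 : ∑ j, (σv j - 1) ^ 2 = ∑ j, (1 - σv j) ^ 2 := by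
      refine Finset.sum_congr rfl fun j _ => by ring
    have h2 : ∑ j, (1 - σv j) ^ 2 ≤ (∑ j, (1 - σv j)) ^ 2 :=
      Finset.sum_sq_le_sq_sum_of_nonneg fun j _ => by linarith [(hσv j).2]
    rw [h1]
    calc Real.sqrt (∑ j, (1 - σv j) ^ 2) ≤ Real.sqrt ((∑ j, (1 - σv j)) ^ 2) :=
          Real.sqrt_le_sqrt h2
      _ = ∑ j, (1 - σv j) := Real.sqrt_sq (Finset.sum_nonneg fun j _ => by linarith [(hσv j).2])
  refine le_trans step1 ?_
  have step2 : ∑ j, (1 - σv j) ≤ ∑ j : Fin d, specNorm D ^ 2 := by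
    refine Finset.sum_le_sum fun j _ => ?_
    have := key j
    have h0 := (hσv j).1
    nlinarith
  calc ∑ j, (1 - σv j) ≤ ∑ j : Fin d, specNorm D ^ 2 := step2
    _ = d * specNorm D ^ 2 := by simp [Finset.sum_const, Finset.card_univ]

end CMDSPaper
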